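/- Let n be even, k = n/2, and j a positive integer with η := j/n ≤ 1/10. If i ∈ [k] satisfies j ≤ ⌈(k-i)/2⌉, then binom(k-i, j) / binom(k, j) ≤ (1-η)^i. Moreover max_{0≤h≤i} binom(k-i, j-h) = binom(k-i, j) in this case. -/

import Mathlib

open Finset

lemma desc_aux : ∀ (j a b : ℕ), a ≤ b →
    a.descFactorial j * b ^ j ≤ b.descFactorial j * a ^ j
  | 0, a, b, _ => by simp
  | (j+1), a, b, hab => by
    rw [Nat.descFactorial_succ, Nat.descFactorial_succ, pow_succ, pow_succ]
    have h1 : (a - j) * b ≤ (b - j) * a := by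
      rcases le_or_gt a j with h | h
      · simp [Nat.sub_eq_zero_of_le h]
      · have hb : j < b := lt_of_lt_of_le h hab
        rw [Nat.sub_mul, Nat.sub_mul, Nat.mul_comm a b]
        exact Nat.sub_le_sub_left (Nat.mul_le_mul_left j hab) _
    calc (a - j) * a.descFactorial j * (b ^ j * b)
        = ((a - j) * b) * (a.descFactorial j * b ^ j) := by ring
      _ ≤ ((b - j) * a) * (b.descFactorial j * a ^ j) :=
          Nat.mul_le_mul h1 (desc_aux j a b hab)
      _ = (b - j) * b.descFactorial j * (a ^ j * a) := by ring

lemma choose_ratio_aux (j a b : ℕ) (hab : a ≤ b) :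
    a.choose j * b ^ j ≤ b.choose j * a ^ j := by
  have h := desc_aux j a b hab
  rw [Nat.descFactorial_eq_factorial_mul_choose, Nat.descFactorial_eq_factorial_mul_choose] at h
  have h2 : j.factorial * (a.choose j * b ^ j) ≤ j.factorial * (b.choose j * a ^ j) := by
    calc j.factorial * (a.choose j * b ^ j) = j.factorial * a.choose j * b ^ j := by ring
      _ ≤ j.factorial * b.choose j * a ^ j := h
      _ = j.factorial * (b.choose j * a ^ j) := by ring
  exact Nat.le_of_mul_le_mul_left h2 j.factorial_pos

lemma choose_mono_half : ∀ (m a b : ℕ), a ≤ b → b ≤ (m + 1) / 2 → m.choose a ≤ m.choose b := by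
  intro m a b hab hb
  induction b with
  | zero => simp_all
  | succ b ih =>
    rcases Nat.eq_or_lt_of_le hab with rfl | h
    · exact le_rfl
    · have h1 : m.choose a ≤ m.choose b := ih (Nat.lt_succ_iff.mp h) (le_trans (Nat.le_succ b) hb)
      refine h1.trans ?_
      rcases lt_or_ge b (m / 2) with hbm | hbm
      · exact Nat.choose_le_succ_of_lt_half_left hbm
      · -- b ≥ m/2 and b+1 ≤ (m+1)/2 forces m = 2b+1
        have h2 : 2 * (b + 1) ≤ m + 1 := by
          have := Nat.div_mul_le_self (m+1) 2
          omega
        have hm : m = 2 * b + 1 := by omega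
        have : m.choose b = m.choose (b + 1) := by
          subst hm; exact (Nat.choose_symm_half b).symm
        omega

/-- Let `n` be even, `k = n/2`, and `j` a positive integer with `η := j/n ≤ 1/10`.
If `i ∈ [k]` satisfies `j ≤ ⌈(k-i)/2⌉`, then `binom(k-i, j) / binom(k, j) ≤ (1-η)^i`.
Moreover `max_{0 ≤ h ≤ i} binom(k-i, j-h) = binom(k-i, j)` in this case. -/
theorem johnson_case_two (n k j i : ℕ) (hn : Even n) (hnpos : 0 < n) (hk : k = n / 2)
    (hjpos : 0 < j) (hη : (j : ℝ) / n ≤ 1 / 10)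
    (hi1 : 1 ≤ i) (hik : i ≤ k) (hcase : j ≤ (k - i + 1) / 2) :
    ((k - i).choose j : ℝ) / (k.choose j) ≤ (1 - (j : ℝ) / n) ^ i ∧
    (Finset.range (i + 1)).sup (fun h => (k - i).choose (j - h)) = (k - i).choose j := by
  have hn2 : n = 2 * k := by
    rcases hn with ⟨m, hm⟩; omega
  have hkpos : 0 < k := lt_of_lt_of_le hi1 hik
  have hjk : j ≤ k := by omega
  constructor
  · set η : ℝ := (j : ℝ) / n with hηdef
    have hη0 : 0 ≤ η := by positivity
    have hkR : (0 : ℝ) < (k : ℝ) := by exact_mod_cast hkpos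
    have hnR : ((n : ℝ)) = 2 * (k : ℝ) := by rw [hn2]; push_cast; ring
    have hchoosepos : (0 : ℝ) < (k.choose j : ℝ) := by
      exact_mod_cast Nat.choose_pos hjk
    have hnat := choose_ratio_aux j (k - i) k (Nat.sub_le k i)
    have hcast : (((k - i) : ℕ) : ℝ) = (k : ℝ) - (i : ℝ) := by
      push_cast [Nat.cast_sub hik]; ring
    have key : ((k - i).choose j : ℝ) / (k.choose j) ≤ (1 - (i : ℝ) / k) ^ j := by
      have h1 : (1 - (i : ℝ) / k) = (((k - i) : ℕ) : ℝ) / (k : ℝ) := by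
        rw [hcast]; field_simp
      rw [h1, div_pow, div_le_div_iff₀ hchoosepos (by positivity)]
      calc (((k - i).choose j : ℝ)) * (k : ℝ) ^ j = (((k - i).choose j * k ^ j : ℕ) : ℝ) := by push_cast; ring
        _ ≤ ((k.choose j * (k - i) ^ j : ℕ) : ℝ) := by exact_mod_cast hnat
        _ = ((k - i : ℕ) : ℝ) ^ j * (k.choose j : ℝ) := by push_cast; ring
    have hik' : (i : ℝ) / k ≤ 1 := by
      rw [div_le_one hkR]; exact_mod_cast hik
    have h0 : (0 : ℝ) ≤ 1 - (i : ℝ) / k := by linarith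
    have e1 : 1 - (i : ℝ) / k ≤ Real.exp (-((i : ℝ) / k)) := by
      have := Real.add_one_le_exp (-((i : ℝ) / k)); linarith
    have e2 : Real.exp (-(2 * η)) ≤ 1 - η := by
      have hE := Real.exp_pos (2 * η)
      have hA := Real.add_one_le_exp (2 * η)
      have hprod : Real.exp (-(2 * η)) * Real.exp (2 * η) = 1 := by
        rw [← Real.exp_add]; norm_num
      nlinarith [Real.exp_pos (-(2 * η))]
    calc ((k - i).choose j : ℝ) / (k.choose j) ≤ (1 - (i : ℝ) / k) ^ j := key
      _ ≤ Real.exp (-((i : ℝ) / k)) ^ j := pow_le_pow_left₀ h0 e1 j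
      _ = Real.exp ((j : ℝ) * (-((i : ℝ) / k))) := (Real.exp_nat_mul _ j).symm
      _ = Real.exp ((i : ℝ) * (-(2 * η))) := by
          rw [hηdef, hnR]; congr 1; field_simp
      _ = Real.exp (-(2 * η)) ^ i := Real.exp_nat_mul _ i
      _ ≤ (1 - η) ^ i := pow_le_pow_left₀ (le_of_lt (Real.exp_pos _)) e2 i
  · apply le_antisymm
    · apply Finset.sup_le
      intro h _
      exact choose_mono_half (k - i) (j - h) j (Nat.sub_le j h) hcase
    · have h0 : 0 ∈ Finset.range (i + 1) := by simp
      simpa using Finset.le_sup (f := fun h => (k - i).choose (j - h)) h0
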